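/- Let ω = (ω₀, …, ω_{n+1}) be a key sequence, θ ∈ (ℂ*)ⁿ, and g₀, …, g_{n+1} the associated key forms. If every key form g_j (0 ≤ j ≤ n+1) lies in the polynomial ring ℂ[x, y] (i.e., g_j involves no negative powers of x), then 𝓑 ∩ ℂ[x,y], the set of those products in 𝓑 that lie in ℂ[x,y], is a ℂ-vector-space basis of ℂ[x,y]. -/

import Mathlib

/-- `dks ω k` is `gcd(|ω₀|, …, |ω_k|)`. -/
def dks (ω : ℕ → ℤ) (k : ℕ) : ℕ :=
  (Finset.range (k + 1)).gcd fun j => (ω j).natAbs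

/-- `alphaK ω k` is `α_k = d_{k−1}/d_k`. -/
def alphaK (ω : ℕ → ℤ) (k : ℕ) : ℕ := dks ω (k - 1) / dks ω k

/-- A key sequence `(ω₀, …, ω_{n+1})`. -/
def IsKeySequence (n : ℕ) (ω : ℕ → ℤ) : Prop :=
  1 ≤ ω 0 ∧ dks ω (n + 1) = 1 ∧
    ∀ k, 1 ≤ k → k ≤ n → ω (k + 1) < (alphaK ω k : ℤ) * ω k

/-- `β k` is, for `1 ≤ k ≤ n`, the unique representation tuple of `α_k·ω_k`:
`0 ≤ β_{k,j} < α_j` for `1 ≤ j ≤ k−1` and `α_k·ω_k = Σ_{j=0}^{k−1} β_{k,j}·ω_j`. -/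
def IsRepTuple (n : ℕ) (ω : ℕ → ℤ) (β : ℕ → ℕ → ℤ) : Prop :=
  ∀ k, 1 ≤ k → k ≤ n →
    (∀ j, 1 ≤ j → j < k → 0 ≤ β k j ∧ β k j < (alphaK ω j : ℤ)) ∧
      (alphaK ω k : ℤ) * ω k = ∑ j ∈ Finset.range k, β k j * ω j

/-- The ring `R = ℂ[x, x⁻¹, y]`, realized as polynomials in `y` over Laurent
polynomials in `x`:  `x` is `C (T 1)` and `y` is `X`. -/
abbrev RR : Type := Polynomial (LaurentPolynomial ℂ)

/-- `g 0, …, g (n+1)` are the key forms associated to the key sequence `ω`,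
`θ ∈ (ℂ*)ⁿ` and the representation tuples `β`:  `g₀ = x`, `g₁ = y` and
`g_{k+1} = g_k^{α_k} − θ_k·x^{β_{k,0}}·g₁^{β_{k,1}}⋯g_{k−1}^{β_{k,k−1}}` for `1 ≤ k ≤ n`
(the possibly negative power `g₀^{β_{k,0}}` is the Laurent monomial `T (β_{k,0})`). -/
def KeyForms (n : ℕ) (ω : ℕ → ℤ) (θ : ℕ → ℂ) (β : ℕ → ℕ → ℤ) (g : ℕ → RR) : Prop :=
  g 0 = Polynomial.C (LaurentPolynomial.T 1) ∧ g 1 = Polynomial.X ∧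
    ∀ k, 1 ≤ k → k ≤ n →
      g (k + 1) = g k ^ alphaK ω k -
        Polynomial.C (LaurentPolynomial.C (θ k) * LaurentPolynomial.T (β k 0)) *
          ∏ j ∈ Finset.Ico 1 k, g j ^ (β k j).toNat

/-- The family `𝓑`: indexed by `(β₀, (β₁,…,β_n), β_{n+1}) ∈ ℤ × ∏_j Fin α_j × ℕ`,
the element `g₀^{β₀}·g₁^{β₁}⋯g_n^{β_n}·g_{n+1}^{β_{n+1}}` of `R` (again `g₀^{β₀}` with
`β₀ ∈ ℤ` is the Laurent monomial `T β₀`). -/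
noncomputable def Bfam (n : ℕ) (ω : ℕ → ℤ) (g : ℕ → RR) :
    ℤ × ((j : Fin n) → Fin (alphaK ω ((j : ℕ) + 1))) × ℕ → RR :=
  fun p =>
    Polynomial.C (LaurentPolynomial.T p.1) *
      (∏ j : Fin n, g ((j : ℕ) + 1) ^ (p.2.1 j : ℕ)) * g (n + 1) ^ p.2.2

namespace S3
variable (ω : ℕ → ℤ)

def Dd (k : ℕ) : ℕ := ∏ j ∈ Finset.Ico 1 k, alphaK ω j

lemma dks_pos (hω0 : 1 ≤ ω 0) (k : ℕ) : 0 < dks ω k := by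
  rcases Nat.eq_zero_or_pos (dks ω k) with h | h
  · exfalso
    have h0 : dks ω k ∣ (ω 0).natAbs := Finset.gcd_dvd (by simp)
    rw [h, zero_dvd_iff] at h0
    have := Int.natAbs_pos.mpr (by omega : ω 0 ≠ 0)
    omega
  · exact h

lemma dks_succ (k : ℕ) : dks ω (k + 1) = Nat.gcd ((ω (k + 1)).natAbs) (dks ω k) := by
  rw [dks, Finset.range_add_one, Finset.gcd_insert]
  rfl

lemma dks_dvd (k : ℕ) : dks ω (k + 1) ∣ dks ω k := by
  rw [dks_succ]; exact Nat.gcd_dvd_right _ _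

lemma alpha_pos (hω0 : 1 ≤ ω 0) (k : ℕ) : 0 < alphaK ω k := by
  cases k with
  | zero =>
    have := dks_pos ω hω0 0
    have h0 : (0:ℕ) - 1 = 0 := rfl
    simp only [alphaK, h0]
    exact Nat.div_pos le_rfl this
  | succ k =>
    have h1 := dks_pos ω hω0 k
    have h2 := dks_pos ω hω0 (k+1)
    have h3 := Nat.le_of_dvd h1 (dks_dvd ω k)
    simp only [alphaK, Nat.add_sub_cancel]
    exact Nat.div_pos h3 h2

lemma alpha_mul_dks (k : ℕ) : alphaK ω (k + 1) * dks ω (k + 1) = dks ω k := by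
  simp only [alphaK, Nat.add_sub_cancel]
  exact Nat.div_mul_cancel (dks_dvd ω k)

lemma Dd_one : Dd ω 1 = 1 := by simp [Dd]

lemma Dd_succ (k : ℕ) (hk : 1 ≤ k) : Dd ω (k + 1) = Dd ω k * alphaK ω k :=
  Finset.prod_Ico_succ_top hk _

lemma Dd_pos (hω0 : 1 ≤ ω 0) (k : ℕ) : 0 < Dd ω k :=
  Finset.prod_pos fun i _ => alpha_pos ω hω0 i

lemma telescope (hω0 : 1 ≤ ω 0) :
    ∀ k, 1 ≤ k → (∑ j ∈ Finset.Ico 1 k, (alphaK ω j - 1) * Dd ω j) + 1 = Dd ω k := by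
  intro k hk
  induction k, hk using Nat.le_induction with
  | base => simp [Dd_one]
  | succ k hk ih =>
    rw [Finset.sum_Ico_succ_top hk, Dd_succ ω k hk]
    have hα := alpha_pos ω hω0 k
    obtain ⟨a, ha⟩ : ∃ a, alphaK ω k = a + 1 := ⟨alphaK ω k - 1, by omega⟩
    have h2 : Dd ω k + (alphaK ω k - 1) * Dd ω k = Dd ω k * alphaK ω k := by
      rw [ha]; simp only [Nat.add_sub_cancel]; ring
    calc (∑ j ∈ Finset.Ico 1 k, (alphaK ω j - 1) * Dd ω j) + (alphaK ω k - 1) * Dd ω k + 1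
        = ((∑ j ∈ Finset.Ico 1 k, (alphaK ω j - 1) * Dd ω j) + 1) + (alphaK ω k - 1) * Dd ω k := by ring
      _ = Dd ω k + (alphaK ω k - 1) * Dd ω k := by rw [ih]
      _ = Dd ω k * alphaK ω k := h2


open Polynomial LaurentPolynomial

variable {n : ℕ} {ω : ℕ → ℤ} {θ : ℕ → ℂ} {β : ℕ → ℕ → ℤ} {g : ℕ → RR}

lemma g_deg (hω0 : 1 ≤ ω 0) (hβ : IsRepTuple n ω β) (hg : KeyForms n ω θ β g) :
    ∀ k, 1 ≤ k → k ≤ n + 1 → (g k).Monic ∧ (g k).natDegree = Dd ω k := by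
  suffices H : ∀ k, 1 ≤ k → k ≤ n + 1 →
      ∀ j, 1 ≤ j → j ≤ k → (g j).Monic ∧ (g j).natDegree = Dd ω j by
    intro k h1 h2; exact H k h1 h2 k h1 le_rfl
  intro k hk
  induction k, hk using Nat.le_induction with
  | base =>
    intro _ j hj1 hj2
    have : j = 1 := le_antisymm hj2 hj1
    subst this
    rw [hg.2.1, Dd_one]
    exact ⟨monic_X, natDegree_X⟩
  | succ k hk ih =>
    intro hk2 j hj1 hj2
    have hkn : k ≤ n := by omega
    have IH := ih (by omega)
    rcases Nat.lt_or_ge j (k+1) with h | h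
    · exact IH j hj1 (by omega)
    have : j = k + 1 := by omega
    subst this
    rw [hg.2.2 k hk hkn]
    have hgk := IH k hk le_rfl
    have hα := alpha_pos ω hω0 k
    have hmon : (g k ^ alphaK ω k).Monic := hgk.1.pow _
    have hdeg : (g k ^ alphaK ω k).natDegree = Dd ω (k+1) := by
      rw [hgk.1.natDegree_pow, hgk.2, Dd_succ ω k hk, Nat.mul_comm]
    set q : RR := Polynomial.C (LaurentPolynomial.C (θ k) * LaurentPolynomial.T (β k 0)) *
          ∏ j ∈ Finset.Ico 1 k, g j ^ (β k j).toNat with hq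
    have hDk := Dd_pos ω hω0 k
    have hDk1 : Dd ω k ≤ Dd ω (k+1) := by
      rw [Dd_succ ω k hk]
      exact Nat.le_mul_of_pos_right _ hα
    have hqdeg : q.natDegree < Dd ω (k+1) := by
      have h1 : q.natDegree ≤ (∏ j ∈ Finset.Ico 1 k, g j ^ (β k j).toNat).natDegree :=
        natDegree_C_mul_le _ _
      have h2 : (∏ j ∈ Finset.Ico 1 k, g j ^ (β k j).toNat).natDegree ≤
          ∑ j ∈ Finset.Ico 1 k, (alphaK ω j - 1) * Dd ω j := by
        refine le_trans (natDegree_prod_le _ _) (Finset.sum_le_sum ?_)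
        intro i hi
        rw [Finset.mem_Ico] at hi
        have hbd := (hβ k hk hkn).1 i hi.1 hi.2
        have hdi := IH i hi.1 (by omega)
        refine le_trans natDegree_pow_le ?_
        rw [hdi.2]
        have : (β k i).toNat ≤ alphaK ω i - 1 := by
          have := alpha_pos ω hω0 i
          omega
        exact Nat.mul_le_mul_right _ this
      have h3 := telescope ω hω0 k hk
      omega
    constructor
    · exact hmon.sub_of_left (degree_lt_degree (by omega))
    · rw [natDegree_sub_eq_left_of_natDegree_lt (by omega), hdeg]


/-- index type of the family -/
abbrev Idx (n : ℕ) (ω : ℕ → ℤ) := ℤ × ((j : Fin n) → Fin (alphaK ω ((j : ℕ) + 1))) × ℕ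

/-- the degree function -/
def Ee (n : ℕ) (ω : ℕ → ℤ) (q : ((j : Fin n) → Fin (alphaK ω ((j : ℕ) + 1))) × ℕ) : ℕ :=
  (∑ j : Fin n, (q.1 j : ℕ) * Dd ω ((j : ℕ) + 1)) + q.2 * Dd ω (n + 1)

/-- the monic part of a family member -/
noncomputable def Mp (n : ℕ) (g : ℕ → RR) (q : ((j : Fin n) → Fin (alphaK ω ((j : ℕ) + 1))) × ℕ) : RR :=
  (∏ j : Fin n, g ((j : ℕ) + 1) ^ (q.1 j : ℕ)) * g (n + 1) ^ q.2

lemma Bfam_eq (p : Idx n ω) :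
    Bfam n ω g p = Polynomial.C (LaurentPolynomial.T p.1) * Mp n g p.2 := by
  rw [Bfam, Mp, mul_assoc]

lemma Mp_monic (hω0 : 1 ≤ ω 0) (hβ : IsRepTuple n ω β) (hg : KeyForms n ω θ β g)
    (q : ((j : Fin n) → Fin (alphaK ω ((j : ℕ) + 1))) × ℕ) :
    (Mp n g q).Monic ∧ (Mp n g q).natDegree = Ee n ω q := by
  have hd := g_deg hω0 hβ hg
  have h1 : (∏ j : Fin n, g ((j : ℕ) + 1) ^ (q.1 j : ℕ)).Monic := by
    refine monic_prod_of_monic _ _ fun i _ => ?_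
    exact ((hd ((i : ℕ) + 1) (Nat.le_add_left 1 _) (Nat.succ_le_succ i.2.le)).1).pow _
  have h2 : (g (n + 1) ^ q.2).Monic :=
    ((hd (n + 1) (by omega) le_rfl).1).pow _
  refine ⟨h1.mul h2, ?_⟩
  have h3 : (∏ j : Fin n, g ((j : ℕ) + 1) ^ (q.1 j : ℕ)).natDegree
      = ∑ j : Fin n, (q.1 j : ℕ) * Dd ω ((j : ℕ) + 1) := by
    have hmono : ∀ i ∈ (Finset.univ : Finset (Fin n)),
        ((fun j : Fin n => g ((j : ℕ) + 1) ^ (q.1 j : ℕ)) i).Monic := fun i _ =>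
      ((hd ((i : ℕ) + 1) (Nat.le_add_left 1 _) (Nat.succ_le_succ i.2.le)).1).pow _
    rw [natDegree_prod_of_monic _ _ hmono]
    refine Finset.sum_congr rfl fun i _ => ?_
    rw [((hd ((i : ℕ) + 1) (Nat.le_add_left 1 _) (Nat.succ_le_succ i.2.le)).1).natDegree_pow,
      (hd ((i : ℕ) + 1) (Nat.le_add_left 1 _) (Nat.succ_le_succ i.2.le)).2]
  have h4 : (g (n + 1) ^ q.2).natDegree = q.2 * Dd ω (n + 1) := by
    rw [((hd (n + 1) (by omega) le_rfl).1).natDegree_pow, (hd (n + 1) (by omega) le_rfl).2]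
  rw [Mp, h1.natDegree_mul h2, Ee, h3, h4]

lemma Bfam_coeff_top (hω0 : 1 ≤ ω 0) (hβ : IsRepTuple n ω β) (hg : KeyForms n ω θ β g)
    (p : Idx n ω) :
    (Bfam n ω g p).coeff (Ee n ω p.2) = LaurentPolynomial.T p.1 := by
  obtain ⟨hm, hdeg⟩ := Mp_monic hω0 hβ hg (θ := θ) p.2
  rw [Bfam_eq, coeff_C_mul, ← hdeg, hm.coeff_natDegree, mul_one]

lemma Bfam_coeff_hi (hω0 : 1 ≤ ω 0) (hβ : IsRepTuple n ω β) (hg : KeyForms n ω θ β g)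
    (p : Idx n ω) (m : ℕ) (hm : Ee n ω p.2 < m) :
    (Bfam n ω g p).coeff m = 0 := by
  obtain ⟨hmon, hdeg⟩ := Mp_monic hω0 hβ hg (θ := θ) p.2
  rw [Bfam_eq, coeff_C_mul, coeff_eq_zero_of_natDegree_lt (by omega), mul_zero]

lemma prod_fin_alpha (m : ℕ) :
    (∏ j : Fin m, alphaK ω ((j : ℕ) + 1)) = Dd ω (m + 1) := by
  have h1 : (∏ j : Fin m, alphaK ω ((j : ℕ) + 1)) = ∏ k ∈ Finset.range m, alphaK ω (k + 1) :=
    Fin.prod_univ_eq_prod_range (fun k => alphaK ω (k + 1)) m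
  rw [h1, Dd, Finset.prod_Ico_eq_prod_range]
  simp only [Nat.add_sub_cancel]
  exact Finset.prod_congr rfl fun i _ => by rw [Nat.add_comm]

lemma Ee_bij (hω0 : 1 ≤ ω 0) : Function.Bijective (Ee n ω) := by
  haveI : NeZero (Dd ω (n + 1)) := ⟨(Dd_pos ω hω0 (n + 1)).ne'⟩
  let E : (((j : Fin n) → Fin (alphaK ω ((j : ℕ) + 1))) × ℕ) ≃ ℕ :=
    (Equiv.prodCongr finPiFinEquiv (Equiv.refl ℕ)).trans
      ((Equiv.prodComm _ _).trans
        ((Equiv.prodCongr (Equiv.refl ℕ) (finCongr (prod_fin_alpha (ω := ω) n))).trans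
          (Nat.divModEquiv (Dd ω (n + 1))).symm))
  have : Ee n ω = ⇑E := by
    funext q
    show Ee n ω q = q.2 * Dd ω (n + 1) + ((finCongr (prod_fin_alpha (ω := ω) n)) (finPiFinEquiv q.1) : ℕ)
    rw [Ee, Nat.add_comm]
    congr 1
    rw [finCongr_apply, Fin.coe_cast, finPiFinEquiv_apply]
    refine Finset.sum_congr rfl fun i _ => ?_
    congr 1
    have := prod_fin_alpha (ω := ω) (i : ℕ)
    rw [← this]
    rfl
  rw [this]
  exact E.bijective


lemma T_li : LinearIndependent ℂ (fun a : ℤ => (LaurentPolynomial.T a : LaurentPolynomial ℂ)) := by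
  have := (Finsupp.linearIndependent_single_one (R := ℂ) (ι := ℤ)).map' _
    (AddMonoidAlgebra.coeffLinearEquiv (R := ℂ) (S := ℂ) (M := ℤ)).symm.ker
  convert this using 1
  all_goals rfl

lemma Bfam_li (hω0 : 1 ≤ ω 0) (hβ : IsRepTuple n ω β) (hg : KeyForms n ω θ β g) :
    LinearIndependent ℂ (Bfam n ω g) := by
  classical
  have hbij := Ee_bij (n := n) (ω := ω) hω0
  rw [linearIndependent_iff'']
  intro s c hcs hsum p
  by_cases hps : p ∈ s
  swap
  · exact hcs p hps
  suffices H : ∀ M : ℕ, ∀ s : Finset (Idx n ω), ∀ c : Idx n ω → ℂ,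
      (∀ p ∈ s, Ee n ω p.2 ≤ M) → (∑ p ∈ s, c p • Bfam n ω g p) = 0 → ∀ p ∈ s, c p = 0 by
    exact H (s.sup (fun p => Ee n ω p.2)) s c (fun p hp => Finset.le_sup (f := fun p : Idx n ω => Ee n ω p.2) hp) hsum p hps
  intro M
  induction M using Nat.strong_induction_on with
  | _ M ih =>
    intro s c hbound hsum p hp
    set s1 := s.filter (fun p => Ee n ω p.2 = M) with hs1
    set s2 := s.filter (fun p => ¬ Ee n ω p.2 = M) with hs2
    have hunion : s1 ∪ s2 = s := Finset.filter_union_filter_not_eq _ s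
    have hdisj : Disjoint s1 s2 := Finset.disjoint_filter_filter_not s s _
    have hsplit : (∑ p ∈ s1, c p • Bfam n ω g p) + (∑ p ∈ s2, c p • Bfam n ω g p) = 0 := by
      rw [← Finset.sum_union hdisj, hunion]; exact hsum
    have hco : (∑ p ∈ s1, c p • (LaurentPolynomial.T p.1 : LaurentPolynomial ℂ)) = 0 := by
      have h0 := congrArg (fun h : RR => h.coeff M) hsum
      simp only [Polynomial.finset_sum_coeff, Polynomial.coeff_smul, Polynomial.coeff_zero] at h0
      rw [← hunion, Finset.sum_union hdisj] at h0
      have e2 : ∑ q ∈ s2, c q • (Bfam n ω g q).coeff M = 0 := by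
        refine Finset.sum_eq_zero fun q hq => ?_
        rw [hs2, Finset.mem_filter] at hq
        rw [Bfam_coeff_hi hω0 hβ hg q M (lt_of_le_of_ne (hbound q hq.1) hq.2), smul_zero]
      have e1 : ∀ q ∈ s1, c q • (Bfam n ω g q).coeff M = c q • LaurentPolynomial.T q.1 := by
        intro q hq
        rw [hs1, Finset.mem_filter] at hq
        rw [← hq.2, Bfam_coeff_top hω0 hβ hg q]
      rw [e2, add_zero] at h0
      rw [← Finset.sum_congr rfl e1]
      exact h0
    have hz1 : ∀ q ∈ s1, c q = 0 := by
      have hinj : ∀ q ∈ s1, ∀ q' ∈ s1, q.1 = q'.1 → q = q' := by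
        intro q hq q' hq' heq
        rw [hs1, Finset.mem_filter] at hq hq'
        have h2 : q.2 = q'.2 := hbij.1 (hq.2.trans hq'.2.symm)
        exact Prod.ext heq h2
      have hli2 : LinearIndependent ℂ
          (fun q : {x // x ∈ s1} => (LaurentPolynomial.T q.1.1 : LaurentPolynomial ℂ)) := by
        refine T_li.comp (fun q : {x // x ∈ s1} => q.1.1) ?_
        intro q q' h
        exact Subtype.ext (hinj q.1 q.2 q'.1 q'.2 h)
      intro q hq
      have hsum2 : ∑ r ∈ Finset.univ, c (r : {x // x ∈ s1}).1 • (LaurentPolynomial.T r.1.1 : LaurentPolynomial ℂ) = 0 := by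
        rw [Finset.univ_eq_attach,
          Finset.sum_attach s1 (fun x => c x • (LaurentPolynomial.T x.1 : LaurentPolynomial ℂ))]
        exact hco
      exact linearIndependent_iff'.mp hli2 Finset.univ _ hsum2 ⟨q, hq⟩ (Finset.mem_univ _)
    have hsum2' : ∑ q ∈ s2, c q • Bfam n ω g q = 0 := by
      have h1 : ∑ q ∈ s1, c q • Bfam n ω g q = 0 :=
        Finset.sum_eq_zero fun q hq => by rw [hz1 q hq, zero_smul]
      rw [h1, zero_add] at hsplit; exact hsplit
    have hz2 : ∀ q ∈ s2, c q = 0 := by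
      rcases Nat.eq_zero_or_pos M with hM | hM
      · intro q hq
        rw [hs2, Finset.mem_filter] at hq
        have h1 := hbound q hq.1
        have h2 := hq.2
        omega
      · exact ih (M - 1) (by omega) s2 c
          (fun q hq => by
            rw [hs2, Finset.mem_filter] at hq
            have h1 := hbound q hq.1
            have h2 := hq.2
            omega) hsum2'
    by_cases hEe : Ee n ω p.2 = M
    · exact hz1 p (by rw [hs1, Finset.mem_filter]; exact ⟨hp, hEe⟩)
    · exact hz2 p (by rw [hs2, Finset.mem_filter]; exact ⟨hp, hEe⟩)


/-- span of the nonnegative monomials in the Laurent ring -/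
noncomputable def Nspan : Submodule ℂ (LaurentPolynomial ℂ) :=
  Submodule.span ℂ (Set.range fun a : ℕ => (LaurentPolynomial.T (a : ℤ) : LaurentPolynomial ℂ))

lemma one_mem_Nspan : (1 : LaurentPolynomial ℂ) ∈ Nspan :=
  Submodule.subset_span ⟨0, by simp⟩

lemma Nspan_mul_le : Nspan * Nspan ≤ Nspan := by
  rw [Nspan, Submodule.span_mul_span]
  refine Submodule.span_le.mpr ?_
  rintro x hx
  obtain ⟨y, hy, z, hz, rfl⟩ := Set.mem_mul.mp hx
  obtain ⟨a, rfl⟩ := hy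
  obtain ⟨b, rfl⟩ := hz
  refine Submodule.subset_span ⟨a + b, ?_⟩
  push_cast
  rw [LaurentPolynomial.T_add]

/-- polynomials whose coefficients have no negative powers of `T` -/
noncomputable def CoeffsIn : Subalgebra ℂ RR where
  carrier := {h : RR | ∀ i, h.coeff i ∈ Nspan}
  add_mem' := fun {a b} ha hb i => by
    rw [Polynomial.coeff_add]; exact add_mem (ha i) (hb i)
  mul_mem' := fun {a b} ha hb i => by
    rw [Polynomial.coeff_mul]
    exact Submodule.sum_mem _ fun x _ => Nspan_mul_le (Submodule.mul_mem_mul (ha x.1) (hb x.2))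
  algebraMap_mem' := fun r i => by
    show (Polynomial.C (algebraMap ℂ (LaurentPolynomial ℂ) r)).coeff i ∈ Nspan
    rw [Polynomial.coeff_C]
    split
    · rw [Algebra.algebraMap_eq_smul_one]
      exact Submodule.smul_mem _ _ one_mem_Nspan
    · exact zero_mem _

lemma mem_CoeffsIn {h : RR} : h ∈ CoeffsIn ↔ ∀ i, h.coeff i ∈ Nspan := Iff.rfl

lemma A_le_CoeffsIn {A : Subalgebra ℂ RR}
    (hA : A = Algebra.adjoin ℂ
      ({Polynomial.C (LaurentPolynomial.T 1), Polynomial.X} : Set RR)) :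
    A ≤ CoeffsIn := by
  rw [hA]
  refine Algebra.adjoin_le ?_
  rintro x hx
  simp only [Set.mem_insert_iff, Set.mem_singleton_iff] at hx
  rcases hx with rfl | rfl
  · intro i
    rw [Polynomial.coeff_C]
    split
    · exact Submodule.subset_span ⟨1, by norm_num⟩
    · exact zero_mem _
  · intro i
    rw [Polynomial.coeff_X]
    split
    · exact one_mem_Nspan
    · exact zero_mem _

lemma C_T_mem_A {A : Subalgebra ℂ RR}
    (hA : A = Algebra.adjoin ℂ
      ({Polynomial.C (LaurentPolynomial.T 1), Polynomial.X} : Set RR)) (a : ℕ) :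
    (Polynomial.C (LaurentPolynomial.T (a : ℤ)) : RR) ∈ A := by
  rw [hA]
  have h1 : (Polynomial.C (LaurentPolynomial.T (a : ℤ)) : RR)
      = (Polynomial.C (LaurentPolynomial.T 1 : LaurentPolynomial ℂ)) ^ a := by
    rw [← map_pow, LaurentPolynomial.T_pow, mul_one]
  rw [h1]
  exact pow_mem (Algebra.subset_adjoin (by simp)) a

lemma Bfam_mem_A {A : Subalgebra ℂ RR}
    (hA : A = Algebra.adjoin ℂ
      ({Polynomial.C (LaurentPolynomial.T 1), Polynomial.X} : Set RR))
    (hpoly : ∀ j, j ≤ n + 1 → g j ∈ A) (p : Idx n ω) (hp : 0 ≤ p.1) :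
    Bfam n ω g p ∈ A := by
  rw [Bfam]
  refine mul_mem (mul_mem ?_ ?_) (pow_mem (hpoly (n + 1) le_rfl) _)
  · obtain ⟨a, ha⟩ := Int.eq_ofNat_of_zero_le hp
    rw [ha]
    exact C_T_mem_A hA a
  · exact prod_mem fun j _ => pow_mem (hpoly _ (Nat.succ_le_succ j.2.le)) _

lemma span_ge (hω0 : 1 ≤ ω 0) (hβ : IsRepTuple n ω β) (hg : KeyForms n ω θ β g)
    {A : Subalgebra ℂ RR}
    (hA : A = Algebra.adjoin ℂ
      ({Polynomial.C (LaurentPolynomial.T 1), Polynomial.X} : Set RR))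
    (hpoly : ∀ j, j ≤ n + 1 → g j ∈ A) :
    ∀ h : RR, h ∈ A →
      h ∈ Submodule.span ℂ (Set.range (Bfam n ω g) ∩ (A : Set RR)) := by
  classical
  suffices H : ∀ m : ℕ, ∀ h : RR, h ∈ A → h.natDegree < m →
      h ∈ Submodule.span ℂ (Set.range (Bfam n ω g) ∩ (A : Set RR)) by
    intro h hh; exact H (h.natDegree + 1) h hh (by omega)
  intro m
  induction m with
  | zero => intro h _ hdeg; omega
  | succ m ihm =>
    intro h hh hdeg
    by_cases h0 : h = 0
    · subst h0; exact zero_mem _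
    set m0 := h.natDegree with hm0
    have hlc : h.coeff m0 ∈ Nspan := (A_le_CoeffsIn hA hh) m0
    rw [Nspan] at hlc
    obtain ⟨cc, hcc⟩ := Finsupp.mem_span_range_iff_exists_finsupp.mp hlc
    have hcc' : ∑ a ∈ cc.support, cc a • (LaurentPolynomial.T (a : ℤ) : LaurentPolynomial ℂ)
        = h.coeff m0 := by simpa [Finsupp.sum] using hcc
    obtain ⟨q0, hq0⟩ := (Ee_bij (n := n) (ω := ω) hω0).2 m0
    set pf : ℕ → Idx n ω := fun a => ((a : ℤ), q0) with hpf
    have hBA : ∀ a : ℕ, Bfam n ω g (pf a) ∈ A := fun a =>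
      Bfam_mem_A hA hpoly (pf a) (Int.ofNat_nonneg a)
    have hmemB : ∀ a : ℕ, Bfam n ω g (pf a)
        ∈ Submodule.span ℂ (Set.range (Bfam n ω g) ∩ (A : Set RR)) := fun a =>
      Submodule.subset_span ⟨Set.mem_range_self _, hBA a⟩
    set h' := h - ∑ a ∈ cc.support, cc a • Bfam n ω g (pf a) with hh'
    have hAh' : h' ∈ A := by
      refine sub_mem hh (sum_mem fun a _ => ?_)
      exact A.smul_mem (hBA a) _
    have hco' : ∀ i, m0 ≤ i → h'.coeff i = 0 := by
      intro i hi
      rw [hh', Polynomial.coeff_sub, Polynomial.finset_sum_coeff]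
      have hcs : ∀ a ∈ cc.support,
          (cc a • Bfam n ω g (pf a)).coeff i = cc a • (Bfam n ω g (pf a)).coeff i :=
        fun a _ => Polynomial.coeff_smul _ _ _
      rw [Finset.sum_congr rfl hcs]
      rcases eq_or_lt_of_le hi with heq | hlt
      · have e1 : ∀ a ∈ cc.support,
            cc a • (Bfam n ω g (pf a)).coeff i
              = cc a • (LaurentPolynomial.T (a : ℤ) : LaurentPolynomial ℂ) := by
          intro a _
          have h2 : (Bfam n ω g (pf a)).coeff (Ee n ω (pf a).2)
              = LaurentPolynomial.T (pf a).1 := Bfam_coeff_top hω0 hβ hg (pf a)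
          have h3 : Ee n ω (pf a).2 = m0 := hq0
          rw [← heq, ← h3, h2]
        rw [Finset.sum_congr rfl e1, hcc', ← heq, sub_self]
      · have e1 : ∀ a ∈ cc.support, cc a • (Bfam n ω g (pf a)).coeff i = 0 := by
          intro a _
          rw [Bfam_coeff_hi hω0 hβ hg (pf a) i (by rw [show Ee n ω (pf a).2 = m0 from hq0]; omega),
            smul_zero]
        rw [Finset.sum_congr rfl e1, Finset.sum_const_zero,
          Polynomial.coeff_eq_zero_of_natDegree_lt hlt, sub_zero]
    have hIH : h' ∈ Submodule.span ℂ (Set.range (Bfam n ω g) ∩ (A : Set RR)) := by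
      by_cases hz : h' = 0
      · rw [hz]; exact zero_mem _
      · have hlt : h'.natDegree < m0 := by
          by_contra hcon
          exact (Polynomial.leadingCoeff_ne_zero.mpr hz) (hco' h'.natDegree (le_of_not_gt hcon))
        exact ihm h' hAh' (by omega)
    have hrepr : h = h' + ∑ a ∈ cc.support, cc a • Bfam n ω g (pf a) := by
      rw [hh']; ring
    rw [hrepr]
    exact add_mem hIH (sum_mem fun a _ => Submodule.smul_mem _ _ (hmemB a))

end S3

/-- If every key form lies in the polynomial subring `ℂ[x,y] ⊆ ℂ[x,x⁻¹,y]`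
(the `ℂ`-subalgebra generated by `x` and `y`), then `𝓑 ∩ ℂ[x,y]` is a
`ℂ`-vector-space basis of `ℂ[x,y]`. -/
theorem stmt3 (n : ℕ) (ω : ℕ → ℤ) (θ : ℕ → ℂ) (β : ℕ → ℕ → ℤ) (g : ℕ → RR)
    (hω : IsKeySequence n ω) (hθ : ∀ k, 1 ≤ k → k ≤ n → θ k ≠ 0)
    (hβ : IsRepTuple n ω β) (hg : KeyForms n ω θ β g)
    (A : Subalgebra ℂ RR)
    (hA : A = Algebra.adjoin ℂ
      ({Polynomial.C (LaurentPolynomial.T 1), Polynomial.X} : Set RR))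
    (hpoly : ∀ j, j ≤ n + 1 → g j ∈ A) :
    LinearIndependent ℂ
        (fun v : (Set.range (Bfam n ω g) ∩ (A : Set RR) : Set RR) => (v : RR)) ∧
      Submodule.span ℂ (Set.range (Bfam n ω g) ∩ (A : Set RR)) =
        Subalgebra.toSubmodule A := by
  
  have hω0 : 1 ≤ ω 0 := hω.1
  constructor
  · have hli := (S3.Bfam_li hω0 hβ hg).linearIndepOn_id
    exact hli.mono Set.inter_subset_left
  · apply le_antisymm
    · rw [Submodule.span_le]
      exact fun x hx => hx.2
    · intro h hh
      exact S3.span_ge hω0 hβ hg hA hpoly h hh
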